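/- Let k₁ > 0 and R₀ > k₁. There exists a constant M > 0 (depending only on k₁ and R₀) such that for all x₁ > 0, all λ > 0, and all R ≥ R₀, the absolutely convergent integral f_R(x₁, λ) = ∫_R^∞ e^{i x₁ ξ} e^{-λ√(ξ² − k₁²)} · ξ / √(ξ² − k₁²) dξ satisfies |f_R(x₁, λ)| ≤ M · e^{-λ√(R² − k₁²)} / x₁. -/

import Mathlib

open MeasureTheory Set Filter

noncomputable def tS (k₁ ξ : ℝ) : ℝ := Real.sqrt (ξ ^ 2 - k₁ ^ 2)
noncomputable def tG (k₁ lam ξ : ℝ) : ℝ :=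
  Real.exp (-(lam * tS k₁ ξ)) * ξ / tS k₁ ξ
noncomputable def tGd (k₁ lam ξ : ℝ) : ℝ :=
  Real.exp (-(lam * tS k₁ ξ)) * (tS k₁ ξ - lam * ξ ^ 2 - ξ ^ 2 / tS k₁ ξ) / (tS k₁ ξ) ^ 2

lemma tS_pos {k₁ ξ : ℝ} (hk : 0 < k₁) (h : k₁ < ξ) : 0 < tS k₁ ξ :=
  Real.sqrt_pos.2 (by nlinarith)

lemma tS_sq {k₁ ξ : ℝ} (hk : 0 < k₁) (h : k₁ < ξ) : tS k₁ ξ ^ 2 = ξ ^ 2 - k₁ ^ 2 :=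
  Real.sq_sqrt (by nlinarith)

lemma hasDerivAt_tS {k₁ ξ : ℝ} (hk : 0 < k₁) (h : k₁ < ξ) :
    HasDerivAt (tS k₁) (ξ / tS k₁ ξ) ξ := by
  have h1 : HasDerivAt (fun x : ℝ => x ^ 2 - k₁ ^ 2) (2 * ξ) ξ := by
    simpa using (hasDerivAt_pow 2 ξ).sub_const (k₁ ^ 2)
  have h2 := h1.sqrt (by nlinarith)
  have hS := tS_pos hk h
  refine h2.congr_deriv ?_
  rw [show Real.sqrt (ξ ^ 2 - k₁ ^ 2) = tS k₁ ξ from rfl]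
  field_simp

lemma hasDerivAt_tE {k₁ lam ξ : ℝ} (hk : 0 < k₁) (h : k₁ < ξ) :
    HasDerivAt (fun x => Real.exp (-(lam * tS k₁ x)))
      (Real.exp (-(lam * tS k₁ ξ)) * (-(lam * (ξ / tS k₁ ξ)))) ξ :=
  (((hasDerivAt_tS hk h).const_mul lam).neg).exp

lemma hasDerivAt_tG {k₁ lam ξ : ℝ} (hk : 0 < k₁) (h : k₁ < ξ) :
    HasDerivAt (tG k₁ lam) (tGd k₁ lam ξ) ξ := by
  have hS := tS_pos hk h
  have hN : HasDerivAt (fun x => Real.exp (-(lam * tS k₁ x)) * x)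
      (Real.exp (-(lam * tS k₁ ξ)) * (-(lam * (ξ / tS k₁ ξ))) * ξ
        + Real.exp (-(lam * tS k₁ ξ)) * 1) ξ :=
    (hasDerivAt_tE hk h).mul (hasDerivAt_id ξ)
  have hdiv := hN.div (hasDerivAt_tS hk h) (ne_of_gt hS)
  refine hdiv.congr_deriv ?_
  unfold tGd
  field_simp
  ring

lemma hasDerivAt_anti {k₁ lam ξ : ℝ} (hk : 0 < k₁) (hlam : 0 < lam) (h : k₁ < ξ) :
    HasDerivAt (fun x => -Real.exp (-(lam * tS k₁ x)) / lam) (tG k₁ lam ξ) ξ := by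
  have hS := tS_pos hk h
  have := ((hasDerivAt_tE (lam := lam) hk h).neg).div_const lam
  refine this.congr_deriv ?_
  unfold tG
  field_simp

lemma tGd_nonpos {k₁ lam ξ : ℝ} (hk : 0 < k₁) (hlam : 0 < lam) (h : k₁ < ξ) :
    tGd k₁ lam ξ ≤ 0 := by
  have hS := tS_pos hk h
  have hsq := tS_sq hk h
  have hnum : tS k₁ ξ - lam * ξ ^ 2 - ξ ^ 2 / tS k₁ ξ ≤ 0 := by
    have h1 : tS k₁ ξ ≤ ξ ^ 2 / tS k₁ ξ := by
      rw [le_div_iff₀ hS]; nlinarith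
    nlinarith
  unfold tGd
  apply div_nonpos_of_nonpos_of_nonneg _ (by positivity)
  exact mul_nonpos_of_nonneg_of_nonpos (Real.exp_nonneg _) hnum

lemma ratio_le {k₁ b ξ : ℝ} (hk : 0 < k₁) (hb : k₁ < b) (h : b ≤ ξ) :
    ξ / tS k₁ ξ ≤ b / tS k₁ b := by
  have hSb := tS_pos hk hb
  have hSξ := tS_pos hk (lt_of_lt_of_le hb h)
  have hξ : 0 < ξ := lt_of_lt_of_le (hk.trans hb) h
  rw [div_le_div_iff₀ hSξ hSb]
  have h1 : ξ * tS k₁ b = Real.sqrt (ξ ^ 2 * (b ^ 2 - k₁ ^ 2)) := by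
    rw [Real.sqrt_mul (sq_nonneg ξ), Real.sqrt_sq hξ.le]; rfl
  have h2 : b * tS k₁ ξ = Real.sqrt (b ^ 2 * (ξ ^ 2 - k₁ ^ 2)) := by
    rw [Real.sqrt_mul (sq_nonneg b), Real.sqrt_sq (hk.trans hb).le]; rfl
  rw [h1, h2]
  have hb2 : b ^ 2 ≤ ξ ^ 2 := by nlinarith
  refine Real.sqrt_le_sqrt ?_
  nlinarith [mul_le_mul_of_nonneg_left hb2 (sq_nonneg k₁)]

lemma tendsto_sqrt_atTop' : Tendsto Real.sqrt atTop atTop := by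
  apply tendsto_atTop_atTop.2
  intro b
  refine ⟨b ^ 2, fun a ha => ?_⟩
  calc b ≤ |b| := le_abs_self b
    _ = Real.sqrt (b ^ 2) := (Real.sqrt_sq_eq_abs b).symm
    _ ≤ Real.sqrt a := Real.sqrt_le_sqrt ha

lemma tendsto_tS_atTop (k₁ : ℝ) : Tendsto (tS k₁) atTop atTop := by
  have h1 : Tendsto (fun ξ : ℝ => ξ ^ 2 - k₁ ^ 2) atTop atTop := by
    apply tendsto_atTop_add_const_right
    exact tendsto_pow_atTop two_ne_zero
  exact tendsto_sqrt_atTop'.comp h1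

lemma tendsto_tE_zero {k₁ lam : ℝ} (hlam : 0 < lam) :
    Tendsto (fun ξ => Real.exp (-(lam * tS k₁ ξ))) atTop (nhds 0) := by
  apply Real.tendsto_exp_atBot.comp
  apply tendsto_neg_atTop_atBot.comp
  exact (tendsto_tS_atTop k₁).const_mul_atTop hlam

/-- Let `k₁ > 0` and `R₀ > k₁`.  There is `M > 0` (depending only on
`k₁, R₀`) such that for all `x₁ > 0`, `λ > 0`, `R ≥ R₀`, the tail integral
`f_R(x₁,λ) = ∫_R^∞ e^{i x₁ ξ} e^{-λ√(ξ²−k₁²)} ξ/√(ξ²−k₁²) dξ` is absolutely convergent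
and satisfies `|f_R(x₁,λ)| ≤ M e^{-λ√(R²−k₁²)}/x₁`. -/
theorem high_frequency_tail_estimate (k₁ R₀ : ℝ) (hk : 0 < k₁) (hR₀ : k₁ < R₀) :
    ∃ M : ℝ, 0 < M ∧ ∀ x₁ : ℝ, 0 < x₁ → ∀ lam : ℝ, 0 < lam → ∀ R : ℝ, R₀ ≤ R →
      IntegrableOn
        (fun ξ : ℝ => Complex.exp (Complex.I * (x₁ : ℂ) * (ξ : ℂ)) *
          ((Real.exp (-(lam * Real.sqrt (ξ ^ 2 - k₁ ^ 2))) : ℝ) : ℂ) * (ξ : ℂ) /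
          ((Real.sqrt (ξ ^ 2 - k₁ ^ 2) : ℝ) : ℂ))
        (Set.Ioi R) ∧
      ‖∫ ξ in Set.Ioi R, Complex.exp (Complex.I * (x₁ : ℂ) * (ξ : ℂ)) *
          ((Real.exp (-(lam * Real.sqrt (ξ ^ 2 - k₁ ^ 2))) : ℝ) : ℂ) * (ξ : ℂ) /
          ((Real.sqrt (ξ ^ 2 - k₁ ^ 2) : ℝ) : ℂ)‖ ≤
        M * Real.exp (-(lam * Real.sqrt (R ^ 2 - k₁ ^ 2))) / x₁ := by
  have hSR₀ := tS_pos hk hR₀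
  set C : ℝ := R₀ / tS k₁ R₀ with hC
  have hCpos : 0 < C := div_pos (hk.trans hR₀) hSR₀
  refine ⟨2 * C, by positivity, ?_⟩
  intro x₁ hx₁ lam hlam R hR
  have hkR : k₁ < R := hR₀.trans_le hR
  have hSR := tS_pos hk hkR
  -- basic complex constants
  have hIx : (Complex.I * (x₁ : ℂ)) ≠ 0 :=
    mul_ne_zero Complex.I_ne_zero (by exact_mod_cast hx₁.ne')
  set u : ℝ → ℂ := fun ξ => Complex.exp (Complex.I * (x₁ : ℂ) * (ξ : ℂ)) / (Complex.I * (x₁ : ℂ))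
    with hu_def
  set A : ℝ → ℂ := fun ξ => Complex.exp (Complex.I * (x₁ : ℂ) * (ξ : ℂ)) * ((tG k₁ lam ξ : ℝ) : ℂ)
    with hA_def
  set B : ℝ → ℂ := fun ξ => u ξ * ((tGd k₁ lam ξ : ℝ) : ℂ) with hB_def
  set F : ℝ → ℂ := fun ξ => u ξ * ((tG k₁ lam ξ : ℝ) : ℂ) with hF_def
  -- norms
  have hexp_norm : ∀ ξ : ℝ, ‖Complex.exp (Complex.I * (x₁ : ℂ) * (ξ : ℂ))‖ = 1 := by
    intro ξ
    rw [Complex.norm_exp]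
    simp
  have hu_norm : ∀ ξ : ℝ, ‖u ξ‖ = 1 / x₁ := by
    intro ξ
    rw [hu_def]
    simp only [norm_div, hexp_norm]
    rw [norm_mul, Complex.norm_I, Complex.norm_real, one_mul, Real.norm_eq_abs,
      abs_of_pos hx₁]
  -- derivative of u
  have hu_deriv : ∀ ξ : ℝ, HasDerivAt u (Complex.exp (Complex.I * (x₁ : ℂ) * (ξ : ℂ))) ξ := by
    intro ξ
    have h0 : HasDerivAt (fun x : ℝ => ((x : ℝ) : ℂ)) 1 ξ := (hasDerivAt_id ξ).ofReal_comp
    have h1 : HasDerivAt (fun x : ℝ => Complex.I * (x₁ : ℂ) * ((x : ℝ) : ℂ))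
        (Complex.I * (x₁ : ℂ)) ξ := by
      simpa using h0.const_mul (Complex.I * (x₁ : ℂ))
    have h2 := h1.cexp
    have h3 := h2.div_const (Complex.I * (x₁ : ℂ))
    refine h3.congr_deriv ?_
    exact mul_div_cancel_right₀ _ hIx
  -- tendsto tG → 0
  have hE0 : Tendsto (fun ξ => Real.exp (-(lam * tS k₁ ξ))) atTop (nhds 0) := tendsto_tE_zero hlam
  have htG0 : Tendsto (tG k₁ lam) atTop (nhds 0) := by
    apply squeeze_zero' (g := fun ξ => Real.exp (-(lam * tS k₁ ξ)) * C)
    · filter_upwards [Filter.eventually_ge_atTop R] with ξ hξ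
      have h1 := tS_pos hk (hkR.trans_le hξ)
      have h2 : (0:ℝ) < ξ := (hk.trans hkR).trans_le hξ
      unfold tG
      positivity
    · filter_upwards [Filter.eventually_ge_atTop R] with ξ hξ
      have hrat : ξ / tS k₁ ξ ≤ C := ratio_le hk hR₀ (hR.trans hξ)
      unfold tG
      rw [mul_div_assoc]
      exact mul_le_mul_of_nonneg_left hrat (Real.exp_nonneg _)
    · simpa using hE0.mul_const C
  -- integrability of tG on Ioi R
  have hanti : ∀ x ∈ Set.Ici R, HasDerivAt (fun y => -Real.exp (-(lam * tS k₁ y)) / lam)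
      (tG k₁ lam x) x := fun x hx => hasDerivAt_anti hk hlam (hkR.trans_le hx)
  have hanti0 : Tendsto (fun y => -Real.exp (-(lam * tS k₁ y)) / lam) atTop (nhds 0) := by
    simpa using (hE0.neg).div_const lam
  have htGint : IntegrableOn (tG k₁ lam) (Set.Ioi R) := by
    apply integrableOn_Ioi_deriv_of_nonneg' hanti _ hanti0
    intro x hx
    have h1 := tS_pos hk (hkR.trans (Set.mem_Ioi.1 hx))
    have hxpos : 0 < x := (hk.trans hkR).trans (Set.mem_Ioi.1 hx)
    unfold tG
    positivity
  -- integrability and integral of tGd on Ioi R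
  have htGderiv : ∀ x ∈ Set.Ici R, HasDerivAt (tG k₁ lam) (tGd k₁ lam x) x :=
    fun x hx => hasDerivAt_tG hk (hkR.trans_le hx)
  have htGd_nonpos : ∀ x ∈ Set.Ioi R, tGd k₁ lam x ≤ 0 :=
    fun x hx => tGd_nonpos hk hlam (hkR.trans (Set.mem_Ioi.1 hx))
  have htGdint : IntegrableOn (tGd k₁ lam) (Set.Ioi R) :=
    integrableOn_Ioi_deriv_of_nonpos' htGderiv htGd_nonpos htG0
  have htGdval : ∫ x in Set.Ioi R, tGd k₁ lam x = 0 - tG k₁ lam R :=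
    integral_Ioi_of_hasDerivAt_of_nonpos' htGderiv htGd_nonpos htG0
  -- continuity / measurability of A and B
  have htGcont : ContinuousOn (tG k₁ lam) (Set.Ioi R) := fun x hx =>
    (hasDerivAt_tG hk (hkR.trans (Set.mem_Ioi.1 hx))).continuousAt.continuousWithinAt
  have htGdcont : ContinuousOn (tGd k₁ lam) (Set.Ioi R) := by
    intro x hx
    have hkx : k₁ < x := hkR.trans (Set.mem_Ioi.1 hx)
    have hSx := tS_pos hk hkx
    have hScont : ContinuousAt (tS k₁) x := (hasDerivAt_tS hk hkx).continuousAt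
    apply ContinuousAt.continuousWithinAt
    unfold tGd
    apply ContinuousAt.div
    · exact (Real.continuous_exp.continuousAt.comp
        ((hScont.const_mul lam).neg)).mul
        ((hScont.sub (continuousAt_const.mul (continuousAt_id.pow 2))).sub
          ((continuousAt_id.pow 2).div hScont hSx.ne'))
    · exact hScont.pow 2
    · positivity
  have hcexp_cont : Continuous fun ξ : ℝ => Complex.exp (Complex.I * (x₁ : ℂ) * (ξ : ℂ)) := by
    apply Complex.continuous_exp.comp
    exact (continuous_const.mul Complex.continuous_ofReal)
  have hAmeas : AEStronglyMeasurable A (volume.restrict (Set.Ioi R)) := by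
    apply ContinuousOn.aestronglyMeasurable _ measurableSet_Ioi
    exact (hcexp_cont.continuousOn).mul (Complex.continuous_ofReal.comp_continuousOn htGcont)
  have hBmeas : AEStronglyMeasurable B (volume.restrict (Set.Ioi R)) := by
    apply ContinuousOn.aestronglyMeasurable _ measurableSet_Ioi
    exact ((hcexp_cont.div_const _).continuousOn).mul
      (Complex.continuous_ofReal.comp_continuousOn htGdcont)
  -- integrability of A and B
  have hAnorm : ∀ ξ : ℝ, ‖A ξ‖ = ‖tG k₁ lam ξ‖ := by
    intro ξ
    simp only [hA_def]
    rw [norm_mul, hexp_norm ξ, one_mul, Complex.norm_real]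
  have hBnorm : ∀ ξ : ℝ, ‖B ξ‖ = (1 / x₁) * ‖tGd k₁ lam ξ‖ := by
    intro ξ
    simp only [hB_def]
    rw [norm_mul, hu_norm ξ, Complex.norm_real]
  have hAint : IntegrableOn A (Set.Ioi R) := by
    apply Integrable.mono' htGint.norm hAmeas
    exact Filter.Eventually.of_forall fun ξ => (hAnorm ξ).le
  have hBint : IntegrableOn B (Set.Ioi R) := by
    apply Integrable.mono' ((htGdint.norm).const_mul (1 / x₁)) hBmeas
    exact Filter.Eventually.of_forall fun ξ => (hBnorm ξ).le
  -- FTC for F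
  have hFderiv : ∀ x ∈ Set.Ici R, HasDerivAt F (A x + B x) x := by
    intro x hx
    have h := (hu_deriv x).mul ((htGderiv x hx).ofReal_comp)
    exact h
  have hFnorm : ∀ ξ : ℝ, ‖F ξ‖ = (1 / x₁) * |tG k₁ lam ξ| := by
    intro ξ
    simp only [hF_def]
    rw [norm_mul, hu_norm ξ, Complex.norm_real, Real.norm_eq_abs]
  have hF0 : Tendsto F atTop (nhds 0) :=
    squeeze_zero_norm (fun ξ => (hFnorm ξ).le)
      (by simpa using (htG0.abs).const_mul (1 / x₁))
  have hFTC : ∫ x in Set.Ioi R, (A x + B x) = 0 - F R :=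
    integral_Ioi_of_hasDerivAt_of_tendsto' hFderiv (hAint.add hBint) hF0
  have hintA : ∫ x in Set.Ioi R, A x = -F R - ∫ x in Set.Ioi R, B x := by
    have hadd := integral_add hAint hBint
    rw [hadd] at hFTC
    linear_combination hFTC
  -- value of tG at R and bounds
  have htGR_nonneg : 0 ≤ tG k₁ lam R := by
    unfold tG
    have hRpos : (0:ℝ) < R := (hk.trans hkR)
    positivity
  have htGR_le : tG k₁ lam R ≤ Real.exp (-(lam * tS k₁ R)) * C := by
    unfold tG
    rw [mul_div_assoc]
    exact mul_le_mul_of_nonneg_left (ratio_le hk hR₀ hR) (Real.exp_nonneg _)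
  have hFRnorm : ‖F R‖ = (1 / x₁) * tG k₁ lam R := by
    rw [hFnorm R, abs_of_nonneg htGR_nonneg]
  have hnormB : ‖∫ x in Set.Ioi R, B x‖ ≤ (1 / x₁) * tG k₁ lam R := by
    have h1 : ‖∫ x in Set.Ioi R, B x‖ ≤ ∫ x in Set.Ioi R, ‖B x‖ :=
      norm_integral_le_integral_norm _
    have h2 : ∫ x in Set.Ioi R, ‖B x‖ = (1 / x₁) * ∫ x in Set.Ioi R, ‖tGd k₁ lam x‖ := by
      rw [← integral_const_mul]
      exact integral_congr_ae (Filter.Eventually.of_forall fun ξ => hBnorm ξ)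
    have h3 : ∫ x in Set.Ioi R, ‖tGd k₁ lam x‖ = ∫ x in Set.Ioi R, -tGd k₁ lam x := by
      apply setIntegral_congr_fun measurableSet_Ioi
      intro x hx
      simp [Real.norm_eq_abs, abs_of_nonpos (htGd_nonpos x hx)]
    have h4 : ∫ x in Set.Ioi R, -tGd k₁ lam x = tG k₁ lam R := by
      rw [integral_neg, htGdval]; ring
    rw [h2, h3, h4] at h1
    exact h1
  have hAbound : ‖∫ x in Set.Ioi R, A x‖ ≤ 2 * C * Real.exp (-(lam * tS k₁ R)) / x₁ := by
    rw [hintA]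
    calc ‖-F R - ∫ x in Set.Ioi R, B x‖ ≤ ‖-F R‖ + ‖∫ x in Set.Ioi R, B x‖ := norm_sub_le _ _
      _ = ‖F R‖ + ‖∫ x in Set.Ioi R, B x‖ := by rw [norm_neg]
      _ ≤ (1 / x₁) * tG k₁ lam R + (1 / x₁) * tG k₁ lam R := by
          rw [hFRnorm]
          exact add_le_add le_rfl hnormB
      _ = 2 * tG k₁ lam R / x₁ := by ring
      _ ≤ 2 * (Real.exp (-(lam * tS k₁ R)) * C) / x₁ := by
          gcongr
      _ = 2 * C * Real.exp (-(lam * tS k₁ R)) / x₁ := by ring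
  -- translate to the statement's integrand
  have hEq : Set.EqOn (fun ξ : ℝ => Complex.exp (Complex.I * (x₁ : ℂ) * (ξ : ℂ)) *
      ((Real.exp (-(lam * Real.sqrt (ξ ^ 2 - k₁ ^ 2))) : ℝ) : ℂ) * (ξ : ℂ) /
      ((Real.sqrt (ξ ^ 2 - k₁ ^ 2) : ℝ) : ℂ)) A (Set.Ioi R) := by
    intro ξ hξ
    rw [hA_def]
    unfold tG tS
    push_cast
    ring
  constructor
  · exact hAint.congr_fun (fun ξ hξ => (hEq hξ).symm) measurableSet_Ioi
  · rw [setIntegral_congr_fun measurableSet_Ioi hEq]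
    have : tS k₁ R = Real.sqrt (R ^ 2 - k₁ ^ 2) := rfl
    rw [← this]
    exact hAbound
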